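/- For every p ∈ (1,∞), one has ∫₀^{π_{2,p}/2} x / sin_{2,p}(x) dx = ∫₀¹ K_{2,p}(k) dk, where K_{2,p}(k) := ∫₀^{π_{2,p}/2} (1 − k^p·(sin_{2,p}θ)^p)^{−1/2} dθ for k ∈ [0,1). -/

import Mathlib

open Real Set MeasureTheory Filter

/-- `sin_{p,q}^{-1}(x) = ∫₀ˣ (1-t^q)^{-1/p} dt`. -/
noncomputable def arcsinpq (p q x : ℝ) : ℝ := ∫ t in (0:ℝ)..x, (1 - t ^ q) ^ (-(1 / p))

/-- The generalized π: `π_{p,q} = 2 sin_{p,q}^{-1}(1)`. -/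
noncomputable def pipq (p q : ℝ) : ℝ := 2 * arcsinpq p q 1

/-- `sin_{p,q}` on `[0, π_{p,q}/2]`, as the inverse of `arcsinpq p q : [0,1] → [0, π_{p,q}/2]`. -/
noncomputable def sinHalf (p q : ℝ) : ℝ → ℝ := Function.invFunOn (arcsinpq p q) (Set.Icc 0 1)

/-- `sin_{p,q}` on all of `ℝ`: extended to `[π_{p,q}/2, π_{p,q}]` by `sin_{p,q}(π_{p,q}-x)` and
then to `ℝ` as the odd `2π_{p,q}`-periodic continuation. -/
noncomputable def sinpq (p q x : ℝ) : ℝ :=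
  let T := pipq p q
  let y := x - 2 * T * (⌊(x + T) / (2 * T)⌋ : ℝ)
  if y < 0 then -(sinHalf p q (if -y ≤ T / 2 then -y else T + y))
  else sinHalf p q (if y ≤ T / 2 then y else T - y)

/-- `cos_{p,q} = (sin_{p,q})'`. -/
noncomputable def cospq (p q : ℝ) : ℝ → ℝ := deriv (sinpq p q)

/-- Rising factorial (Pochhammer symbol) `(a)_n = a(a+1)⋯(a+n-1)`. -/
noncomputable def poch (a : ℝ) (n : ℕ) : ℝ := ∏ i ∈ Finset.range n, (a + i)

variable {p : ℝ}

lemma fInt (hp : 1 < p) :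
    IntervalIntegrable (fun t : ℝ => (1 - t ^ p) ^ (-(1/2) : ℝ)) volume 0 1 := by
  have hg : IntervalIntegrable (fun t : ℝ => (1 - t) ^ (-(1/2) : ℝ)) volume 0 1 := by
    have := (intervalIntegral.intervalIntegrable_rpow' (a := 0) (b := 1)
      (r := (-(1/2) : ℝ)) (by norm_num)).comp_sub_left 1
    simpa using this.symm
  refine hg.mono_fun ?_ ?_
  · exact (by fun_prop : Measurable fun t : ℝ => (1 - t ^ p) ^ (-(1/2) : ℝ)).aestronglyMeasurable
  · filter_upwards [ae_restrict_mem measurableSet_uIoc] with t ht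
    rw [uIoc_of_le (by norm_num : (0:ℝ) ≤ 1)] at ht
    obtain ⟨ht0, ht1⟩ := ht
    have h1 : t ^ p ≤ t := by
      calc t ^ p ≤ t ^ (1:ℝ) := Real.rpow_le_rpow_of_exponent_ge ht0 ht1 hp.le
      _ = t := Real.rpow_one t
    have htp : (0:ℝ) ≤ 1 - t ^ p := by
      have : t ^ p ≤ 1 := h1.trans ht1
      linarith
    rw [Real.norm_of_nonneg (Real.rpow_nonneg htp _),
      Real.norm_of_nonneg (Real.rpow_nonneg (by linarith) _)]
    rcases eq_or_lt_of_le ht1 with h | h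
    · subst h; simp [Real.one_rpow]
    · exact Real.rpow_le_rpow_of_nonpos (by linarith) (by linarith) (by norm_num)

lemma arcsin_eq (p x : ℝ) :
    arcsinpq 2 p x = ∫ t in (0:ℝ)..x, (1 - t ^ p) ^ (-(1/2) : ℝ) := by
  norm_num [arcsinpq]

lemma fInt' (hp : 1 < p) {a b : ℝ} (ha : a ∈ Icc (0:ℝ) 1) (hb : b ∈ Icc (0:ℝ) 1) :
    IntervalIntegrable (fun t : ℝ => (1 - t ^ p) ^ (-(1/2) : ℝ)) volume a b :=
  (fInt hp).mono_set (by
    rw [uIcc_of_le (by norm_num : (0:ℝ) ≤ 1)]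
    exact uIcc_subset_Icc ha hb)

lemma arcsin_strictMono (hp : 1 < p) : StrictMonoOn (arcsinpq 2 p) (Icc 0 1) := by
  intro x hx y hy hxy
  have key : arcsinpq 2 p y = arcsinpq 2 p x
      + ∫ t in x..y, (1 - t ^ p) ^ (-(1/2) : ℝ) := by
    rw [arcsin_eq, arcsin_eq,
      intervalIntegral.integral_add_adjacent_intervals
        (fInt' hp (by simp) hx) (fInt' hp hx hy)]
  have hpos : 0 < ∫ t in x..y, (1 - t ^ p) ^ (-(1/2) : ℝ) := by
    apply intervalIntegral.intervalIntegral_pos_of_pos_on (fInt' hp hx hy) _ hxy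
    intro t ⟨ht1, ht2⟩
    have h0 : 0 ≤ t := le_trans hx.1 ht1.le
    have h1 : t < 1 := lt_of_lt_of_le ht2 hy.2
    exact Real.rpow_pos_of_pos (by
      have := Real.rpow_lt_one h0 h1 (by linarith : 0 < p); linarith) _
  linarith [key]

lemma arcsin_cont (hp : 1 < p) : ContinuousOn (arcsinpq 2 p) (Icc 0 1) := by
  have := intervalIntegral.continuousOn_primitive_interval (a := 0) (b := 1)
    (μ := volume) (f := fun t : ℝ => (1 - t ^ p) ^ (-(1/2) : ℝ))
    (by
      rw [uIcc_of_le (by norm_num : (0:ℝ) ≤ 1)]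
      exact (intervalIntegrable_iff_integrableOn_Icc_of_le (by norm_num)).mp (fInt hp))
  rw [uIcc_of_le (by norm_num : (0:ℝ) ≤ 1)] at this
  intro x hx
  exact (this x hx).congr (fun y _ => arcsin_eq p y) (arcsin_eq p x)

lemma arcsinpq_zero : arcsinpq 2 p 0 = 0 := by
  rw [arcsin_eq]; exact intervalIntegral.integral_same

lemma arcsinpq_one : arcsinpq 2 p 1 = pipq 2 p / 2 := by
  rw [pipq]; ring

lemma pipq_pos (hp : 1 < p) : 0 < pipq 2 p := by
  have h0 : arcsinpq 2 p 0 = 0 := arcsinpq_zero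
  have := arcsin_strictMono hp (left_mem_Icc.mpr zero_le_one)
    (right_mem_Icc.mpr zero_le_one) zero_lt_one
  rw [h0, pipq] at *
  linarith

lemma exists_arcsin_eq (hp : 1 < p) {θ : ℝ} (hθ : θ ∈ Icc 0 (pipq 2 p / 2)) :
    ∃ s ∈ Icc (0:ℝ) 1, arcsinpq 2 p s = θ := by
  have h := intermediate_value_Icc (zero_le_one) (arcsin_cont hp)
  rw [arcsinpq_zero, arcsinpq_one] at h
  obtain ⟨s, hs, hs'⟩ := h hθ
  exact ⟨s, hs, hs'⟩

lemma sinHalf_mem (hp : 1 < p) {θ : ℝ} (hθ : θ ∈ Icc 0 (pipq 2 p / 2)) :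
    sinHalf 2 p θ ∈ Icc (0:ℝ) 1 :=
  Function.invFunOn_mem (exists_arcsin_eq hp hθ)

lemma arcsin_sinHalf (hp : 1 < p) {θ : ℝ} (hθ : θ ∈ Icc 0 (pipq 2 p / 2)) :
    arcsinpq 2 p (sinHalf 2 p θ) = θ :=
  Function.invFunOn_eq (exists_arcsin_eq hp hθ)

lemma sinHalf_pos (hp : 1 < p) {θ : ℝ} (hθ : θ ∈ Icc 0 (pipq 2 p / 2)) (h0 : 0 < θ) :
    0 < sinHalf 2 p θ := by
  rcases lt_or_eq_of_le (sinHalf_mem hp hθ).1 with h | h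
  · exact h
  · exfalso
    have := arcsin_sinHalf hp hθ
    rw [← h, arcsinpq_zero] at this
    linarith

lemma sinHalf_monotoneOn (hp : 1 < p) :
    MonotoneOn (sinHalf 2 p) (Icc 0 (pipq 2 p / 2)) := by
  intro a ha b hb hab
  by_contra h
  push_neg at h
  have := arcsin_strictMono hp (sinHalf_mem hp hb) (sinHalf_mem hp ha) h
  rw [arcsin_sinHalf hp ha, arcsin_sinHalf hp hb] at this
  linarith

lemma sinpq_eq_sinHalf (hp : 1 < p) {x : ℝ} (hx : x ∈ Icc 0 (pipq 2 p / 2)) :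
    sinpq 2 p x = sinHalf 2 p x := by
  have hT := pipq_pos hp
  have hfl : ⌊(x + pipq 2 p) / (2 * pipq 2 p)⌋ = 0 := by
    rw [Int.floor_eq_zero_iff]
    constructor
    · have := hx.1
      apply div_nonneg <;> linarith
    · rw [div_lt_one (by linarith)]
      have := hx.2; linarith
  simp only [sinpq, hfl]
  norm_num
  rw [if_neg (not_lt.mpr hx.1), if_pos hx.2]

noncomputable def Sfun (p : ℝ) : ℝ → ℝ :=
  fun θ => sinHalf 2 p (min (max θ 0) (pipq 2 p / 2))

lemma Sfun_eq (hp : 1 < p) {x : ℝ} (hx : x ∈ Icc 0 (pipq 2 p / 2)) :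
    Sfun p x = sinHalf 2 p x := by
  rw [Sfun, max_eq_left hx.1, min_eq_left hx.2]

lemma Sfun_monotone (hp : 1 < p) : Monotone (Sfun p) := by
  have hT2 : 0 < pipq 2 p / 2 := by linarith [pipq_pos hp]
  intro a b hab
  have hmem : ∀ x : ℝ, min (max x 0) (pipq 2 p / 2) ∈ Icc 0 (pipq 2 p / 2) :=
    fun x => ⟨le_min (le_max_right _ _) hT2.le, min_le_right _ _⟩
  exact sinHalf_monotoneOn hp (hmem a) (hmem b)
    (min_le_min (max_le_max hab le_rfl) le_rfl)

lemma Sfun_measurable (hp : 1 < p) : Measurable (Sfun p) :=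
  (Sfun_monotone hp).measurable

lemma Sfun_mem (hp : 1 < p) {x : ℝ} (hx : x ∈ Icc 0 (pipq 2 p / 2)) :
    Sfun p x ∈ Icc (0:ℝ) 1 := by
  rw [Sfun_eq hp hx]; exact sinHalf_mem hp hx

lemma inner_k (hp : 1 < p) {s : ℝ} (hs0 : 0 < s) (hs1 : s ≤ 1) :
    (∫ k in (0:ℝ)..1, (1 - k ^ p * s ^ p) ^ (-(1/2) : ℝ))
      = arcsinpq 2 p s / s := by
  have h1 : EqOn (fun k : ℝ => (1 - k ^ p * s ^ p) ^ (-(1/2) : ℝ))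
      (fun k : ℝ => (fun u : ℝ => (1 - u ^ p) ^ (-(1/2) : ℝ)) (k * s))
      (uIcc (0:ℝ) 1) := by
    intro k hk
    rw [uIcc_of_le zero_le_one] at hk
    simp only
    rw [Real.mul_rpow hk.1 hs0.le]
  rw [intervalIntegral.integral_congr h1,
    intervalIntegral.integral_comp_mul_right
      (fun u : ℝ => (1 - u ^ p) ^ (-(1/2) : ℝ)) hs0.ne']
  rw [zero_mul, one_mul, smul_eq_mul, ← arcsin_eq]
  ring

noncomputable def Ffun (p : ℝ) : ℝ × ℝ → ℝ :=
  fun q => (1 - q.1 ^ p * (Sfun p q.2) ^ p) ^ (-(1/2) : ℝ)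

lemma Ffun_measurable (hp : 1 < p) : Measurable (Ffun p) := by
  have hS := Sfun_measurable hp
  unfold Ffun
  fun_prop

lemma Ffun_bound (hp : 1 < p) {k θ : ℝ} (hk : k ∈ Ioo (0:ℝ) 1)
    (hθ : θ ∈ Icc 0 (pipq 2 p / 2)) :
    ‖Ffun p (k, θ)‖ ≤ (1 - k ^ p) ^ (-(1/2) : ℝ) := by
  obtain ⟨hS0, hS1⟩ := Sfun_mem hp hθ
  have hkp1 : k ^ p < 1 := Real.rpow_lt_one hk.1.le hk.2 (by linarith)
  have hkp0 : 0 ≤ k ^ p := Real.rpow_nonneg hk.1.le _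
  have hSp : (Sfun p θ) ^ p ≤ 1 := Real.rpow_le_one hS0 hS1 (by linarith)
  have hmul : k ^ p * (Sfun p θ) ^ p ≤ k ^ p := mul_le_of_le_one_right hkp0 hSp
  have hbase : 0 < 1 - k ^ p := by linarith
  rw [Ffun, Real.norm_of_nonneg (Real.rpow_nonneg (by simp only; linarith) _)]
  exact Real.rpow_le_rpow_of_nonpos hbase (by simp only; linarith) (by norm_num)

lemma Ffun_integrable (hp : 1 < p) :
    Integrable (Ffun p)
      ((volume.restrict (Ioc (0:ℝ) 1)).prod
        (volume.restrict (Ioc (0:ℝ) (pipq 2 p / 2)))) := by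
  have hT2 : 0 < pipq 2 p / 2 := by linarith [pipq_pos hp]
  set μ := volume.restrict (Ioc (0:ℝ) 1) with hμ
  set ν := volume.restrict (Ioc (0:ℝ) (pipq 2 p / 2)) with hν
  haveI : IsFiniteMeasure ν := ⟨by
    rw [hν, Measure.restrict_apply_univ]
    exact measure_Ioc_lt_top⟩
  have hνuniv : (ν Set.univ).toReal = pipq 2 p / 2 := by
    rw [hν, Measure.restrict_apply_univ, Real.volume_Ioc]
    rw [ENNReal.toReal_ofReal (by linarith)]
    ring
  have hae : ∀ᵐ k ∂μ, k ∈ Ioo (0:ℝ) 1 := by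
    have h1 : ∀ᵐ k ∂μ, k ∈ Ioc (0:ℝ) 1 := ae_restrict_mem measurableSet_Ioc
    have h2 : ∀ᵐ k ∂μ, k ≠ 1 := by
      rw [ae_iff]
      have : {k : ℝ | ¬ k ≠ 1} = {1} := by ext; simp
      rw [this]
      exact le_antisymm ((Measure.restrict_apply_le _ _).trans_eq
        (measure_singleton 1)) zero_le
    filter_upwards [h1, h2] with k h1 h2
    exact ⟨h1.1, lt_of_le_of_ne h1.2 h2⟩
  have haeθ : ∀ᵐ θ ∂ν, θ ∈ Icc 0 (pipq 2 p / 2) := by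
    filter_upwards [ae_restrict_mem measurableSet_Ioc] with θ hθ
    exact ⟨hθ.1.le, hθ.2⟩
  rw [MeasureTheory.integrable_prod_iff (Ffun_measurable hp).aestronglyMeasurable]
  constructor
  · filter_upwards [hae] with k hk
    refine Integrable.mono' (integrable_const ((1 - k ^ p) ^ (-(1/2) : ℝ)))
      ?_ ?_
    · exact ((Ffun_measurable hp).comp (by fun_prop)).aestronglyMeasurable
    · filter_upwards [haeθ] with θ hθ
      exact Ffun_bound hp hk hθ
  · have hgi : IntegrableOn (fun k : ℝ => (1 - k ^ p) ^ (-(1/2) : ℝ))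
        (Ioc 0 1) volume :=
      (intervalIntegrable_iff_integrableOn_Ioc_of_le zero_le_one).mp (fInt hp)
    refine Integrable.mono' (hgi.mul_const (pipq 2 p / 2))
      ((Ffun_measurable hp).norm.aestronglyMeasurable.integral_prod_right') ?_
    filter_upwards [hae] with k hk
    have hb : ∀ᵐ θ ∂ν, ‖‖Ffun p (k, θ)‖‖ ≤ (1 - k ^ p) ^ (-(1/2) : ℝ) := by
      filter_upwards [haeθ] with θ hθ
      rw [norm_norm]
      exact Ffun_bound hp hk hθ
    calc ‖∫ θ, ‖Ffun p (k, θ)‖ ∂ν‖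
        ≤ (1 - k ^ p) ^ (-(1/2) : ℝ) * (ν Set.univ).toReal :=
          norm_integral_le_of_norm_le_const hb
      _ = (1 - k ^ p) ^ (-(1/2) : ℝ) * (pipq 2 p / 2) := by rw [hνuniv]

/-- `∫₀^{π_{2,p}/2} x/sin_{2,p}(x) dx = ∫₀¹ K_{2,p}(k) dk`, where
`K_{2,p}(k) = ∫₀^{π_{2,p}/2} (1-k^p sin_{2,p}(θ)^p)^{-1/2} dθ`. -/
theorem integral_eq_complete_elliptic (p : ℝ) (hp : 1 < p) :
    (∫ x in (0:ℝ)..(pipq 2 p / 2), x / sinpq 2 p x)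
      = ∫ k in (0:ℝ)..1,
          ∫ θ in (0:ℝ)..(pipq 2 p / 2), (1 - k ^ p * sinpq 2 p θ ^ p) ^ (-(1/2) : ℝ) := by
  have hT2 : 0 < pipq 2 p / 2 := by linarith [pipq_pos hp]
  have hRHS : (∫ k in (0:ℝ)..1,
      ∫ θ in (0:ℝ)..(pipq 2 p / 2), (1 - k ^ p * sinpq 2 p θ ^ p) ^ (-(1/2) : ℝ))
      = ∫ k in Ioc (0:ℝ) 1, ∫ θ in Ioc (0:ℝ) (pipq 2 p / 2), Ffun p (k, θ) := by
    rw [intervalIntegral.integral_of_le zero_le_one]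
    refine setIntegral_congr_fun measurableSet_Ioc (fun k _ => ?_)
    rw [intervalIntegral.integral_of_le hT2.le]
    refine setIntegral_congr_fun measurableSet_Ioc (fun θ hθ => ?_)
    have hθ' : θ ∈ Icc 0 (pipq 2 p / 2) := ⟨hθ.1.le, hθ.2⟩
    rw [sinpq_eq_sinHalf hp hθ', ← Sfun_eq hp hθ']
    rfl
  have hswap : (∫ k in Ioc (0:ℝ) 1,
        ∫ θ in Ioc (0:ℝ) (pipq 2 p / 2), Ffun p (k, θ))
      = ∫ θ in Ioc (0:ℝ) (pipq 2 p / 2), ∫ k in Ioc (0:ℝ) 1, Ffun p (k, θ) :=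
    MeasureTheory.integral_integral_swap (f := fun k θ => Ffun p (k, θ))
      (Ffun_integrable hp)
  have hinner : ∀ θ ∈ Ioc (0:ℝ) (pipq 2 p / 2),
      (∫ k in Ioc (0:ℝ) 1, Ffun p (k, θ)) = θ / Sfun p θ := by
    intro θ hθ
    have hθ' : θ ∈ Icc 0 (pipq 2 p / 2) := ⟨hθ.1.le, hθ.2⟩
    have hs0 : 0 < Sfun p θ := by
      rw [Sfun_eq hp hθ']; exact sinHalf_pos hp hθ' hθ.1
    have hs1 : Sfun p θ ≤ 1 := (Sfun_mem hp hθ').2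
    have harc : arcsinpq 2 p (Sfun p θ) = θ := by
      rw [Sfun_eq hp hθ']; exact arcsin_sinHalf hp hθ'
    have := inner_k hp hs0 hs1
    rw [intervalIntegral.integral_of_le zero_le_one] at this
    rw [show (fun k => Ffun p (k, θ)) =
      (fun k : ℝ => (1 - k ^ p * (Sfun p θ) ^ p) ^ (-(1/2) : ℝ)) from rfl, this, harc]
  rw [hRHS, hswap, setIntegral_congr_fun measurableSet_Ioc hinner,
    intervalIntegral.integral_of_le hT2.le]
  refine setIntegral_congr_fun measurableSet_Ioc (fun x hx => ?_)
  have hx' : x ∈ Icc 0 (pipq 2 p / 2) := ⟨hx.1.le, hx.2⟩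
  rw [sinpq_eq_sinHalf hp hx', ← Sfun_eq hp hx']
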